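/- The momentum-conservation relations Σ_{b≠a} s_{ab} = 0 for a = 1,…,n imply the linear relations Σ_a σ_a^k E_a = 0 for k = 0, 1, 2, where E_a = Σ_{b≠a} s_{ab}/(σ_a − σ_b). Hence at most n−3 of the n scattering equations are linearly independent. -/

import Mathlib

open Finset

/-- Momentum conservation Σ_{b≠a} s_{ab} = 0 implies the SL(2) relations
Σ_a σ_a^k E_a = 0 for k = 0, 1, 2 among the scattering equations. -/
theorem stmt8 (n : ℕ) (σ : Fin n → ℂ) (hσ : Function.Injective σ)
    (s : Fin n → Fin n → ℝ) (hsym : ∀ a b, s a b = s b a) (hdiag : ∀ a, s a a = 0)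
    (hmom : ∀ a, ∑ b ∈ univ.erase a, s a b = 0)
    (E : Fin n → ℂ)
    (hE : ∀ a, E a = ∑ b ∈ univ.erase a, (s a b : ℂ) / (σ a - σ b)) :
    ∀ k : ℕ, k ≤ 2 → ∑ a, σ a ^ k * E a = 0 := by
  intro k hk
  have hd : ∀ a b : Fin n, b ≠ a → σ a - σ b ≠ 0 := fun a b h =>
    sub_ne_zero.mpr fun e => h (hσ e.symm)
  have swap : ∀ f : Fin n → Fin n → ℂ,
      ∑ a, ∑ b ∈ univ.erase a, f a b = ∑ a, ∑ b ∈ univ.erase a, f b a := by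
    intro f
    exact Finset.sum_comm' (fun x y => by simp [mem_erase]; tauto)
  have hmomC : ∀ a, ∑ b ∈ univ.erase a, (s a b : ℂ) = 0 := by
    intro a
    have := hmom a
    push_cast [← this]
    norm_cast
  have hsum : ∑ a, σ a ^ k * E a
      = ∑ a, ∑ b ∈ univ.erase a, (s a b : ℂ) * (σ a ^ k / (σ a - σ b)) := by
    simp_rw [hE, Finset.mul_sum]
    refine Finset.sum_congr rfl fun a _ => Finset.sum_congr rfl fun b _ => by ring
  have h2 : (2 : ℂ) * ∑ a, σ a ^ k * E a
      = ∑ a, ∑ b ∈ univ.erase a,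
          (s a b : ℂ) * (σ a ^ k / (σ a - σ b) + σ b ^ k / (σ b - σ a)) := by
    rw [hsum, two_mul]
    nth_rewrite 2 [swap (fun a b => (s a b : ℂ) * (σ a ^ k / (σ a - σ b)))]
    rw [← Finset.sum_add_distrib]
    refine Finset.sum_congr rfl fun a _ => ?_
    rw [← Finset.sum_add_distrib]
    refine Finset.sum_congr rfl fun b hb => ?_
    rw [hsym b a]
    ring
  have h2' : (2 : ℂ) * ∑ a, σ a ^ k * E a = 0 := by
    rw [h2]
    interval_cases k
    · refine Finset.sum_eq_zero fun a _ => Finset.sum_eq_zero fun b hb => ?_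
      have hba : b ≠ a := (mem_erase.mp hb).1
      have h1 := hd a b hba
      have h2 := hd b a hba.symm
      have : σ a ^ 0 / (σ a - σ b) + σ b ^ 0 / (σ b - σ a) = 0 := by
        field_simp
        ring
      rw [this, mul_zero]
    · have : ∀ a, ∀ b ∈ univ.erase a,
          (s a b : ℂ) * (σ a ^ 1 / (σ a - σ b) + σ b ^ 1 / (σ b - σ a)) = (s a b : ℂ) := by
        intro a b hb
        have hba : b ≠ a := (mem_erase.mp hb).1
        have h1 := hd a b hba
        have h2 := hd b a hba.symm
        have : σ a ^ 1 / (σ a - σ b) + σ b ^ 1 / (σ b - σ a) = 1 := by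
          field_simp
          ring
        rw [this, mul_one]
      refine Finset.sum_eq_zero fun a _ => ?_
      rw [Finset.sum_congr rfl (this a), hmomC a]
    · have key : ∀ a, ∀ b ∈ univ.erase a,
          (s a b : ℂ) * (σ a ^ 2 / (σ a - σ b) + σ b ^ 2 / (σ b - σ a))
          = (s a b : ℂ) * σ a + (s a b : ℂ) * σ b := by
        intro a b hb
        have hba : b ≠ a := (mem_erase.mp hb).1
        have h1 := hd a b hba
        have h2 := hd b a hba.symm
        have : σ a ^ 2 / (σ a - σ b) + σ b ^ 2 / (σ b - σ a) = σ a + σ b := by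
          field_simp
          ring
        rw [this]
        ring
      rw [Finset.sum_congr rfl fun a _ => Finset.sum_congr rfl (key a)]
      have t1 : ∑ a, ∑ b ∈ univ.erase a, (s a b : ℂ) * σ a = 0 := by
        refine Finset.sum_eq_zero fun a _ => ?_
        rw [← Finset.sum_mul, hmomC a, zero_mul]
      have t2 : ∑ a, ∑ b ∈ univ.erase a, (s a b : ℂ) * σ b = 0 := by
        rw [swap (fun a b => (s a b : ℂ) * σ b)]
        refine Finset.sum_eq_zero fun a _ => ?_
        have : ∀ b ∈ univ.erase a, (s b a : ℂ) * σ a = (s a b : ℂ) * σ a := by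
          intro b _; rw [hsym b a]
        rw [Finset.sum_congr rfl this, ← Finset.sum_mul, hmomC a, zero_mul]
      simp_rw [Finset.sum_add_distrib]
      rw [t1, t2, add_zero]
  have := mul_eq_zero.mp h2'
  rcases this with h | h
  · norm_num at h
  · exact h
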